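/- Let T be a thick locally finite tree, let G ≤ Aut(T) be type-distance-transitive, label the two types (parity classes) of vertices 0 and 1, let t ∈ {0,1}, and let k ≥ 1. Assume: (a) for every vertex c of type 1−t and every vertex v with d(v,c) = k we have O(c,w) ≤ Θ(v,c,1), where w is the neighbour of c on the geodesic from c to v; and (b) if k ≥ 2, for every vertex c of type t and every vertex v with d(v,c) = k−1 we have O(c,w) ≤ Θ(v,c,1). Then for every vertex c of type t and every vertex v with d(v,c) = k we have O(c,w) ≤ Θ(v,c,0). -/

import Mathlib

/-- The pointwise stabilizer of a set of vertices, inside the full symmetric group. -/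
def ptStab {V : Type*} (s : Set V) : Subgroup (Equiv.Perm V) where
  carrier := {g | ∀ v ∈ s, g v = v}
  one_mem' := by intro v _; rfl
  mul_mem' := by
    intro a b ha hb v hv
    simp only [Set.mem_setOf_eq] at *
    rw [Equiv.Perm.mul_apply, hb v hv, ha v hv]
  inv_mem' := by
    intro a ha v hv
    simp only [Set.mem_setOf_eq] at *
    calc a⁻¹ v = a⁻¹ (a v) := by rw [ha v hv]
      _ = v := a.symm_apply_apply v

/-- `G` consists of automorphisms of the graph `T`. -/
def PreservesAdj {V : Type*} (T : SimpleGraph V) (G : Subgroup (Equiv.Perm V)) : Prop :=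
  ∀ g ∈ G, ∀ a b : V, T.Adj a b ↔ T.Adj (g a) (g b)

/-- `G` is `k`-type-distance-transitive. -/
def TypeDistTrans {V : Type*} (T : SimpleGraph V) (G : Subgroup (Equiv.Perm V)) (k : ℕ) : Prop :=
  ∀ x y x' y' : V, T.dist x y = k → T.dist x' y' = k → Even (T.dist x x') →
    ∃ g ∈ G, g x = x' ∧ g y = y'

/-- The tree is thick: every vertex has at least three neighbours. -/
def Thick {V : Type*} (T : SimpleGraph V) : Prop :=
  ∀ v : V, ∃ a b c : V, T.Adj v a ∧ T.Adj v b ∧ T.Adj v c ∧ a ≠ b ∧ a ≠ c ∧ b ≠ c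

/-- `N` is the soluble residual `O^∞(P)` of the subgroup `P`. -/
def IsSolubleResidualIn {X : Type*} [Group X] (P N : Subgroup X) : Prop :=
  N ≤ P ∧ (N.subgroupOf P).Normal ∧ (∃ n, derivedSeries ↥P n ≤ N.subgroupOf P) ∧
    ∀ M : Subgroup X, M ≤ P → (M.subgroupOf P).Normal →
      (∃ n, derivedSeries ↥P n ≤ M.subgroupOf P) → N ≤ M

/-- `Θ(v, c, i)`: the local action on `S_v(c,1) = S(c,1) ∖ {w}` of the pointwise
stabilizer in `G` of `{c} ∪ B^v_i(c)`. -/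
def Theta {V : Type*} (T : SimpleGraph V) (G : Subgroup (Equiv.Perm V)) (c w : V)
    (res : ↥(G ⊓ ptStab {c} ⊓ ptStab {w}) →* Equiv.Perm {u : V // T.Adj c u ∧ u ≠ w})
    (v : V) (i : ℕ) : Subgroup (Equiv.Perm {u : V // T.Adj c u ∧ u ≠ w}) :=
  Subgroup.map res
    ((ptStab {u : V | T.dist v u = T.dist v c + i ∧
        T.dist v c + T.dist c u ≠ T.dist v u}).comap
      (G ⊓ ptStab {c} ⊓ ptStab {w}).subtype)


namespace TreeSwapAux
open SimpleGraph

variable {V : Type*} {T : SimpleGraph V}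

lemma path_eq (hacyc : T.IsAcyclic) {x y : V} {P Q : T.Walk x y}
    (hP : P.IsPath) (hQ : Q.IsPath) : P = Q :=
  congrArg Subtype.val (hacyc.path_unique ⟨P, hP⟩ ⟨Q, hQ⟩)

lemma path_length_eq_dist (hconn : T.Connected) (hacyc : T.IsAcyclic) {x y : V}
    {P : T.Walk x y} (hP : P.IsPath) : P.length = T.dist x y := by
  obtain ⟨Q, hQ⟩ := hconn.exists_walk_length_eq_dist x y
  have hQP : Q.IsPath := Q.isPath_of_length_eq_dist hQ
  rw [path_eq hacyc hP hQP, hQ]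

/-- Members of a shortest walk are "between" the endpoints. -/
lemma between_of_mem_support (hconn : T.Connected) {x y m : V} {W : T.Walk x y}
    (hW : W.length = T.dist x y) (hm : m ∈ W.support) :
    T.dist x m + T.dist m y = T.dist x y := by
  classical
  have hspec := W.take_spec hm
  have hlen : (W.takeUntil m hm).length + (W.dropUntil m hm).length = W.length := by
    rw [← Walk.length_append, hspec]
  have h1 : T.dist x m ≤ (W.takeUntil m hm).length := dist_le _
  have h2 : T.dist m y ≤ (W.dropUntil m hm).length := dist_le _
  have h3 : T.dist x y ≤ T.dist x m + T.dist m y := hconn.dist_triangle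
  omega

lemma mem_support_of_between (hconn : T.Connected) (hacyc : T.IsAcyclic) {x y m : V}
    (h : T.dist x m + T.dist m y = T.dist x y) {W : T.Walk x y} (hW : W.IsPath) :
    m ∈ W.support := by
  classical
  obtain ⟨P₁, hP₁⟩ := hconn.exists_walk_length_eq_dist x m
  obtain ⟨P₂, hP₂⟩ := hconn.exists_walk_length_eq_dist m y
  have hA : (P₁.append P₂).length = T.dist x y := by
    rw [Walk.length_append, hP₁, hP₂, h]
  have hAP : (P₁.append P₂).IsPath := (P₁.append P₂).isPath_of_length_eq_dist hA
  have := path_eq hacyc hAP hW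
  rw [← this]
  exact Walk.subset_support_append_left P₁ P₂ (Walk.end_mem_support P₁)

/-- Two points on a common geodesic are linearly ordered. -/
lemma between_trans (hconn : T.Connected) (hacyc : T.IsAcyclic) {x y a b : V}
    (ha : T.dist x a + T.dist a y = T.dist x y)
    (hb : T.dist x b + T.dist b y = T.dist x y)
    (hle : T.dist x a ≤ T.dist x b) :
    T.dist x a + T.dist a b = T.dist x b := by
  classical
  obtain ⟨P, hP⟩ := hconn.exists_walk_length_eq_dist x y
  have hPp : P.IsPath := P.isPath_of_length_eq_dist hP
  have hbm : b ∈ P.support := mem_support_of_between hconn hacyc hb hPp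
  have ham : a ∈ P.support := mem_support_of_between hconn hacyc ha hPp
  have hspec := P.take_spec hbm
  have hlen : (P.takeUntil b hbm).length + (P.dropUntil b hbm).length = P.length := by
    rw [← Walk.length_append, hspec]
  have h1 : T.dist x b ≤ (P.takeUntil b hbm).length := dist_le _
  have h2 : T.dist b y ≤ (P.dropUntil b hbm).length := dist_le _
  have htl : (P.takeUntil b hbm).length = T.dist x b := by omega
  have hdl : (P.dropUntil b hbm).length = T.dist b y := by omega
  have hsplit : a ∈ (P.takeUntil b hbm).support ∨ a ∈ (P.dropUntil b hbm).support := by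
    rw [← Walk.mem_support_append_iff, hspec]; exact ham
  rcases hsplit with hcase | hcase
  · exact between_of_mem_support hconn htl hcase
  · have := between_of_mem_support hconn hdl hcase
    have hcomm : T.dist a b = T.dist b a := dist_comm
    omega

lemma isPath_concat {x y z : V} {P : T.Walk x y} (hP : P.IsPath) (h : T.Adj y z)
    (hz : z ∉ P.support) : (P.concat h).IsPath := by
  rw [Walk.isPath_def, Walk.support_concat]
  rw [Walk.isPath_def] at hP
  simp [List.nodup_append, hP, hz]
  exact fun a ha h => hz (h ▸ ha)

/-- A vertex adjacent to `x` is one step closer or one step further from `o`. -/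
lemma dist_step (hconn : T.Connected) (hacyc : T.IsAcyclic) (o : V) {x y : V}
    (h : T.Adj x y) : T.dist o y = T.dist o x + 1 ∨ T.dist o x = T.dist o y + 1 := by
  obtain ⟨P, hP⟩ := hconn.exists_walk_length_eq_dist o x
  have hPp : P.IsPath := P.isPath_of_length_eq_dist hP
  by_cases hy : y ∈ P.support
  · right
    have := between_of_mem_support hconn hP hy
    have h1 : T.dist y x = 1 := dist_eq_one_iff_adj.mpr h.symm
    omega
  · left
    have hQ : (P.concat h).IsPath := isPath_concat hPp h hy
    have := path_length_eq_dist hconn hacyc hQ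
    rw [Walk.length_concat, hP] at this
    omega

/-- Parity lemma: trees are bipartite. -/
lemma parity3 (hconn : T.Connected) (hacyc : T.IsAcyclic) (o x y : V) :
    Even (T.dist o x + T.dist o y + T.dist x y) := by
  suffices H : ∀ {x y : V} (W : T.Walk x y), Even (T.dist o x + T.dist o y + W.length) by
    obtain ⟨W, hW⟩ := hconn.exists_walk_length_eq_dist x y
    have := H W
    rwa [hW] at this
  intro x y W
  induction W with
  | nil => simpa using (even_add_self _)
  | @cons a b c hadj W ih =>
    rw [Nat.even_iff] at ih ⊢
    rcases dist_step hconn hacyc o hadj with h | h <;>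
      · rw [Walk.length_cons]; omega

/-- Uniqueness of the neighbour on the geodesic towards `o`. -/
lemma parent_unique (hconn : T.Connected) (hacyc : T.IsAcyclic) {o u y y' : V}
    (hy : T.Adj u y) (hy' : T.Adj u y')
    (hd : T.dist o y + 1 = T.dist o u) (hd' : T.dist o y' + 1 = T.dist o u) :
    y = y' := by
  obtain ⟨P, hP⟩ := hconn.exists_walk_length_eq_dist o y
  obtain ⟨P', hP'⟩ := hconn.exists_walk_length_eq_dist o y'
  have hPp : P.IsPath := P.isPath_of_length_eq_dist hP
  have hPp' : P'.IsPath := P'.isPath_of_length_eq_dist hP'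
  have hu : u ∉ P.support := by
    intro hmem
    have := between_of_mem_support hconn hP hmem
    have h1 : T.dist u y = 1 := dist_eq_one_iff_adj.mpr hy
    omega
  have hu' : u ∉ P'.support := by
    intro hmem
    have := between_of_mem_support hconn hP' hmem
    have h1 : T.dist u y' = 1 := dist_eq_one_iff_adj.mpr hy'
    omega
  have hQ : (P.concat hy.symm).IsPath := isPath_concat hPp hy.symm hu
  have hQ' : (P'.concat hy'.symm).IsPath := isPath_concat hPp' hy'.symm hu'
  have heq : P.concat hy.symm = P'.concat hy'.symm := path_eq hacyc hQ hQ'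
  have hsupp := congrArg Walk.support heq
  rw [Walk.support_concat, Walk.support_concat] at hsupp
  have h2 : P.support.reverse = P'.support.reverse := by
    have := congrArg List.reverse hsupp
    rw [List.reverse_append,
      List.reverse_append] at this
    simpa using this
  have h3 : P.reverse.support = P'.reverse.support := by
    rwa [Walk.support_reverse, Walk.support_reverse]
  rw [Walk.support_eq_cons P.reverse, Walk.support_eq_cons P'.reverse] at h3
  injection h3

lemma exists_next (hconn : T.Connected) (hacyc : T.IsAcyclic) {x y : V}
    (h : T.dist x y ≠ 0) : ∃ z, T.Adj x z ∧ T.dist z y + 1 = T.dist x y := by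
  obtain ⟨P, hP⟩ := hconn.exists_walk_length_eq_dist x y
  have hPp : P.IsPath := P.isPath_of_length_eq_dist hP
  cases P with
  | nil => rw [← hP] at h; simp at h
  | cons hadj W =>
    rename_i z
    refine ⟨z, hadj, ?_⟩
    have hW : W.IsPath := hPp.of_cons
    have := path_length_eq_dist hconn hacyc hW
    rw [Walk.length_cons] at hP
    omega

lemma adj_of_dist_eq_one {x y : V} (h : T.dist x y = 1) : T.Adj x y :=
  dist_eq_one_iff_adj.mp h

lemma two_children (hconn : T.Connected) (hacyc : T.IsAcyclic) (hthick : Thick T)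
    (v₀ u : V) : ∃ y₁ y₂, T.Adj u y₁ ∧ T.Adj u y₂ ∧ y₁ ≠ y₂ ∧
      T.dist v₀ y₁ = T.dist v₀ u + 1 ∧ T.dist v₀ y₂ = T.dist v₀ u + 1 := by
  obtain ⟨a, b, c, hua, hub, huc, hab, hac, hbc⟩ := hthick u
  have key : ∀ y y' : V, T.Adj u y → T.Adj u y' → y ≠ y' →
      T.dist v₀ u = T.dist v₀ y + 1 → T.dist v₀ u = T.dist v₀ y' + 1 → False := by
    intro y y' h1 h2 h3 h4 h5
    exact h3 (parent_unique hconn hacyc h1 h2 h4.symm h5.symm)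
  rcases dist_step hconn hacyc v₀ hua with ha | ha <;>
  rcases dist_step hconn hacyc v₀ hub with hb | hb <;>
  rcases dist_step hconn hacyc v₀ huc with hc | hc
  · exact ⟨a, b, hua, hub, hab, ha, hb⟩
  · exact ⟨a, b, hua, hub, hab, ha, hb⟩
  · exact ⟨a, c, hua, huc, hac, ha, hc⟩
  · exact absurd (key b c hub huc hbc hb hc) not_false
  · exact ⟨b, c, hub, huc, hbc, hb, hc⟩
  · exact absurd (key a c hua huc hac ha hc) not_false
  · exact absurd (key a b hua hub hab ha hb) not_false
  · exact absurd (key a b hua hub hab ha hb) not_false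

lemma common_neighbor_unique (hacyc : T.IsAcyclic) {y₁ y₂ x x' : V}
    (h1 : T.Adj x y₁) (h2 : T.Adj x y₂) (h1' : T.Adj x' y₁) (h2' : T.Adj x' y₂)
    (hne : y₁ ≠ y₂) : x = x' := by
  have hP : (Walk.cons h1.symm (Walk.cons h2 Walk.nil) : T.Walk y₁ y₂).IsPath := by
    rw [Walk.isPath_def]
    simp [h1.ne', h2.ne, hne]
  have hP' : (Walk.cons h1'.symm (Walk.cons h2' Walk.nil) : T.Walk y₁ y₂).IsPath := by
    rw [Walk.isPath_def]
    simp [h1'.ne', h2'.ne, hne]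
  have := path_eq hacyc hP hP'
  have hs := congrArg Walk.support this
  simp only [Walk.support_cons] at hs
  injection hs with _ hs
  injection hs

lemma perm_walk {g : Equiv.Perm V} (hg : ∀ a b, T.Adj a b ↔ T.Adj (g a) (g b))
    {a b : V} (W : T.Walk a b) : ∃ W' : T.Walk (g a) (g b), W'.length = W.length := by
  induction W with
  | nil => exact ⟨Walk.nil, rfl⟩
  | cons hadj W ih =>
    obtain ⟨W', hW'⟩ := ih
    exact ⟨Walk.cons ((hg _ _).mp hadj) W', by simp [hW']⟩

lemma perm_dist (hconn : T.Connected) {g : Equiv.Perm V}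
    (hg : ∀ a b, T.Adj a b ↔ T.Adj (g a) (g b)) (a b : V) :
    T.dist (g a) (g b) = T.dist a b := by
  have hg' : ∀ a b, T.Adj a b ↔ T.Adj (g⁻¹ a) (g⁻¹ b) := by
    intro a b
    have := hg (g⁻¹ a) (g⁻¹ b)
    simpa using this.symm
  apply le_antisymm
  · obtain ⟨W, hW⟩ := hconn.exists_walk_length_eq_dist a b
    obtain ⟨W', hW'⟩ := perm_walk hg W
    calc T.dist (g a) (g b) ≤ W'.length := dist_le _
    _ = T.dist a b := by rw [hW', hW]
  · obtain ⟨W, hW⟩ := hconn.exists_walk_length_eq_dist (g a) (g b)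
    obtain ⟨W', hW'⟩ := perm_walk hg' W
    have : T.dist (g⁻¹ (g a)) (g⁻¹ (g b)) ≤ W'.length := dist_le _
    simpa [hW', hW] using this

/-- The downward rigidity lemma: an automorphism fixing `z` and the part of the
sphere of radius `r` around `v₀` not behind `z` fixes everything not behind `z`
within distance `r` of `v₀`. -/
lemma down (hconn : T.Connected) (hacyc : T.IsAcyclic) (hthick : Thick T)
    {g : Equiv.Perm V} (hg : ∀ a b, T.Adj a b ↔ T.Adj (g a) (g b))
    (v₀ z : V) (hz : g z = z) (r : ℕ)
    (hfix : ∀ u, T.dist v₀ u = r → T.dist v₀ z + T.dist z u ≠ T.dist v₀ u → g u = u) :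
    ∀ m j u, j + m = r → T.dist v₀ u = j →
      T.dist v₀ z + T.dist z u ≠ T.dist v₀ u → g u = u := by
  intro m
  induction m with
  | zero =>
    intro j u hjm hu hcond
    exact hfix u (by omega) hcond
  | succ m ih =>
    intro j u hjm hu hcond
    have huz : u ≠ z := by
      intro h; subst h; simp at hcond
    obtain ⟨y₁, y₂, hy₁, hy₂, hyne, hd₁, hd₂⟩ := two_children hconn hacyc hthick v₀ u
    have fixchild : ∀ y, T.Adj u y → T.dist v₀ y = j + 1 → g y = y := by
      intro y hy hdy
      by_cases hyz : y = z
      · rw [hyz, hz]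
      · refine ih (j+1) y (by omega) hdy ?_
        intro hbet
        rw [hdy] at hbet
        -- z is between v₀ and y; build the path to y through u
        obtain ⟨P, hP⟩ := hconn.exists_walk_length_eq_dist v₀ u
        have hPp : P.IsPath := P.isPath_of_length_eq_dist hP
        have hyP : y ∉ P.support := by
          intro hmem
          have := between_of_mem_support hconn hP hmem
          rw [hu] at this; omega
        have hQ : (P.concat hy).IsPath := isPath_concat hPp hy hyP
        have hQlen : (P.concat hy).length = T.dist v₀ y := by
          rw [Walk.length_concat, hP, hu, hdy]
        have hzQ : z ∈ (P.concat hy).support :=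
          mem_support_of_between hconn hacyc (by rw [hdy]; omega) hQ
        rw [Walk.support_concat, List.mem_append] at hzQ
        rcases hzQ with hzP | hzy
        · have := between_of_mem_support hconn hP hzP
          rw [hu] at this
          exact hcond (by rw [hu]; omega)
        · simp at hzy; exact hyz hzy.symm
    have hgy₁ : g y₁ = y₁ := fixchild y₁ hy₁ (by omega)
    have hgy₂ : g y₂ = y₂ := fixchild y₂ hy₂ (by omega)
    have h1 : T.Adj (g u) y₁ := by rw [← hgy₁]; exact (hg u y₁).mp hy₁
    have h2 : T.Adj (g u) y₂ := by rw [← hgy₂]; exact (hg u y₂).mp hy₂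
    exact (common_neighbor_unique hacyc hy₁ hy₂ h1 h2 hyne).symm

lemma sphere_finite (hconn : T.Connected) (hacyc : T.IsAcyclic)
    (hlf : ∀ u : V, (T.neighborSet u).Finite) (v : V) :
    ∀ n, {u : V | T.dist v u = n}.Finite := by
  intro n
  induction n with
  | zero =>
    apply Set.Finite.subset (Set.finite_singleton v)
    intro u hu
    simp only [Set.mem_setOf_eq] at hu
    exact (hconn.dist_eq_zero_iff.mp hu).symm ▸ rfl
  | succ n ih =>
    apply Set.Finite.subset ((ih.biUnion (fun x _ => hlf x)))
    intro u hu
    simp only [Set.mem_setOf_eq] at hu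
    have e2 : T.dist u v = T.dist v u := dist_comm
    obtain ⟨z, hz, hzd⟩ := exists_next hconn hacyc (x := u) (y := v) (by omega)
    have e1 : T.dist v z = T.dist z v := dist_comm
    refine Set.mem_biUnion (show T.dist v z = n by omega) ?_
    exact hz.symm
end TreeSwapAux
section GroupAux

variable {X : Type*} [Group X]

/-- Iterated commutator subgroup (derived series of `H` inside the ambient group). -/
def itComm (H : Subgroup X) : ℕ → Subgroup X
  | 0 => H
  | n + 1 => ⁅itComm H n, itComm H n⁆

lemma itComm_succ (H : Subgroup X) (n : ℕ) :
    itComm H (n + 1) = ⁅itComm H n, itComm H n⁆ := rfl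

lemma itComm_succ_le (H : Subgroup X) (n : ℕ) : itComm H (n + 1) ≤ itComm H n := by
  rw [itComm_succ]
  refine Subgroup.commutator_le.mpr fun g hg h hh => ?_
  rw [commutatorElement_def]
  exact mul_mem (mul_mem (mul_mem hg hh) (inv_mem hg)) (inv_mem hh)

lemma itComm_antitone (H : Subgroup X) {m n : ℕ} (h : m ≤ n) :
    itComm H n ≤ itComm H m := by
  induction n with
  | zero => simp_all
  | succ n ih =>
    rcases Nat.lt_or_ge m (n+1) with hlt | hge
    · exact le_trans (itComm_succ_le H n) (ih (by omega))
    · have : m = n + 1 := by omega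
      rw [this]

lemma itComm_le (H : Subgroup X) (n : ℕ) : itComm H n ≤ H := itComm_antitone H (Nat.zero_le n)

lemma map_derivedSeries_le {A : Type*} [Group A] (f : A →* X) (H : Subgroup X)
    (hf : f.range ≤ H) : ∀ n, Subgroup.map f (derivedSeries A n) ≤ itComm H n := by
  intro n
  induction n with
  | zero => rw [derivedSeries_zero, ← MonoidHom.range_eq_map]; exact hf
  | succ n ih =>
    rw [derivedSeries_succ, Subgroup.map_commutator, itComm_succ]
    exact Subgroup.commutator_mono ih ih

lemma map_subtype_derivedSeries (H : Subgroup X) :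
    ∀ n, Subgroup.map H.subtype (derivedSeries ↥H n) = itComm H n := by
  intro n
  induction n with
  | zero => rw [derivedSeries_zero, ← MonoidHom.range_eq_map, Subgroup.range_subtype]; rfl
  | succ n ih => rw [derivedSeries_succ, Subgroup.map_commutator, itComm_succ, ih]

lemma subgroupOf_itComm (H : Subgroup X) (n : ℕ) :
    (itComm H n).subgroupOf H = derivedSeries ↥H n := by
  rw [← map_subtype_derivedSeries H n]
  exact Subgroup.comap_map_eq_self_of_injective H.subtype_injective _

lemma exists_SR (H : Subgroup X) [Finite X] :
    ∃ (N : Subgroup X) (n₀ : ℕ), IsSolubleResidualIn H N ∧ ⁅N, N⁆ = N ∧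
      ∀ m, n₀ ≤ m → itComm H m ≤ N := by
  obtain ⟨n₀, hn₀⟩ : ∃ n₀, Nat.card (itComm H n₀) =
      sInf (Set.range fun n => Nat.card (itComm H n)) :=
    Nat.sInf_mem (Set.range_nonempty _)
  have stab1 : itComm H (n₀ + 1) = itComm H n₀ := by
    refine Subgroup.eq_of_le_of_card_ge (itComm_succ_le H n₀) ?_
    rw [hn₀]
    exact Nat.sInf_le ⟨n₀ + 1, rfl⟩
  have stab : ∀ m, n₀ ≤ m → itComm H m = itComm H n₀ := by
    intro m
    induction m with
    | zero => intro hm; have h0 : n₀ = 0 := by omega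
              rw [h0]
    | succ m ih =>
      intro hm
      rcases Nat.lt_or_ge n₀ (m+1) with hlt | hge
      · rw [itComm_succ, ih (by omega), ← itComm_succ, stab1]
      · have : n₀ = m + 1 := by omega
        rw [this]
  refine ⟨itComm H n₀, n₀, ⟨itComm_le H n₀, ?_, ⟨n₀, le_of_eq (subgroupOf_itComm H n₀).symm⟩, ?_⟩,
    (itComm_succ H n₀ ▸ stab1), fun m hm => le_of_eq (stab m hm)⟩
  · rw [subgroupOf_itComm H n₀]
    exact derivedSeries_normal _ _
  · intro M hMH _ ⟨m, hm⟩
    have h1 : derivedSeries ↥H (max n₀ m) ≤ derivedSeries ↥H m := by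
      rw [← subgroupOf_itComm, ← subgroupOf_itComm]
      exact Subgroup.comap_mono (itComm_antitone H (le_max_right n₀ m))
    calc itComm H n₀ = itComm H (max n₀ m) := (stab _ (le_max_left n₀ m)).symm
      _ = Subgroup.map H.subtype (derivedSeries ↥H (max n₀ m)) :=
          (map_subtype_derivedSeries H _).symm
      _ ≤ Subgroup.map H.subtype (M.subgroupOf H) := Subgroup.map_mono (le_trans h1 hm)
      _ = M ⊓ H := Subgroup.subgroupOf_map_subtype M H
      _ ≤ M := inf_le_left

lemma SR_unique {H N N' : Subgroup X} (h1 : IsSolubleResidualIn H N)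
    (h2 : IsSolubleResidualIn H N') : N = N' :=
  le_antisymm (h1.2.2.2 N' h2.1 h2.2.1 h2.2.2.1) (h2.2.2.2 N h1.1 h1.2.1 h1.2.2.1)

lemma SR_perfect [Finite X] {H Os : Subgroup X} (h : IsSolubleResidualIn H Os) :
    ⁅Os, Os⁆ = Os := by
  obtain ⟨N, n₀, hN, hperf, _⟩ := exists_SR H
  rw [SR_unique h hN]
  exact hperf

lemma perfect_le_map_derivedSeries {A B : Type*} [Group A] [Group B] (f : A →* B)
    {S : Subgroup B} (hS : ⁅S, S⁆ = S) (h0 : S ≤ f.range) :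
    ∀ n, S ≤ Subgroup.map f (derivedSeries A n) := by
  intro n
  induction n with
  | zero => rw [derivedSeries_zero, ← MonoidHom.range_eq_map]; exact h0
  | succ n ih =>
    rw [derivedSeries_succ, Subgroup.map_commutator]
    calc S = ⁅S, S⁆ := hS.symm
      _ ≤ _ := Subgroup.commutator_mono ih ih

end GroupAux

lemma mem_ptStab_iff {V : Type*} {s : Set V} {g : Equiv.Perm V} :
    g ∈ ptStab s ↔ ∀ v ∈ s, g v = v := Iff.rfl

lemma list_prod_apply_fix {V : Type*} (l : List (Equiv.Perm V)) (x : V)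
    (h : ∀ f ∈ l, f x = x) : l.prod x = x := by
  induction l with
  | nil => rfl
  | cons f l ih =>
    rw [List.prod_cons, Equiv.Perm.mul_apply, ih (fun f hf => h f (List.mem_cons_of_mem _ hf))]
    exact h f List.mem_cons_self

lemma list_prod_apply_move {V : Type*} (l₁ l₂ : List (Equiv.Perm V)) (e : Equiv.Perm V)
    (x y : V) (h₂ : ∀ f ∈ l₂, f x = x) (he : e x = y) (h₁ : ∀ f ∈ l₁, f y = y) :
    (l₁ ++ e :: l₂).prod x = y := by
  rw [List.prod_append, List.prod_cons, Equiv.Perm.mul_apply, Equiv.Perm.mul_apply,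
    list_prod_apply_fix l₂ x h₂, he, list_prod_apply_fix l₁ y h₁]

set_option maxHeartbeats 2000000 in
open TreeSwapAux SimpleGraph in
/-- type swap.  Label the type of the base vertex `o` as type `t`.
Assume (a) for every vertex `c` of type `1−t` and every `v` with `d(v,c) = k` we have
`O(c,w) ≤ Θ(v,c,1)`, and (b) if `k ≥ 2`, for every `c` of type `t` and every `v` with
`d(v,c) = k−1` we have `O(c,w) ≤ Θ(v,c,1)` (in both cases `w` is the neighbour of `c` on
the geodesic from `c` to `v`).  Then for every `c` of type `t` and every `v` with
`d(v,c) = k` we have `O(c,w) ≤ Θ(v,c,0)`. -/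
theorem type_swap_soluble_residual
    {V : Type*} (T : SimpleGraph V) (hconn : T.Connected) (hacyc : T.IsAcyclic)
    (hthick : Thick T) (hlf : ∀ u : V, (T.neighborSet u).Finite)
    (G : Subgroup (Equiv.Perm V)) (hG : PreservesAdj T G)
    (hTDT : ∀ k', TypeDistTrans T G k')
    (o : V) (k : ℕ) (hk : 1 ≤ k)
    (res : ∀ c w : V,
      ↥(G ⊓ ptStab {c} ⊓ ptStab {w}) →* Equiv.Perm {u : V // T.Adj c u ∧ u ≠ w})
    (hres : ∀ (c w : V) (g : ↥(G ⊓ ptStab {c} ⊓ ptStab {w}))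
      (u : {u : V // T.Adj c u ∧ u ≠ w}),
      ((res c w g) u : V) = (g : Equiv.Perm V) (u : V))
    (ha : ∀ c v w : V, Odd (T.dist o c) → T.dist v c = k → T.Adj c w →
      T.dist c v = T.dist w v + 1 →
      ∀ Os : Subgroup (Equiv.Perm {u : V // T.Adj c u ∧ u ≠ w}),
        IsSolubleResidualIn (res c w).range Os → Os ≤ Theta T G c w (res c w) v 1)
    (hb : 2 ≤ k → ∀ c v w : V, Even (T.dist o c) → T.dist v c = k - 1 → T.Adj c w →
      T.dist c v = T.dist w v + 1 →
      ∀ Os : Subgroup (Equiv.Perm {u : V // T.Adj c u ∧ u ≠ w}),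
        IsSolubleResidualIn (res c w).range Os → Os ≤ Theta T G c w (res c w) v 1) :
    ∀ c v w : V, Even (T.dist o c) → T.dist v c = k → T.Adj c w →
      T.dist c v = T.dist w v + 1 →
      ∀ Os : Subgroup (Equiv.Perm {u : V // T.Adj c u ∧ u ≠ w}),
        IsSolubleResidualIn (res c w).range Os → Os ≤ Theta T G c w (res c w) v 0 := by
  classical
  intro c v w hEven hdvc hAdjcw hgeo Os hOs
  have hdcv : T.dist c v = k := by rw [SimpleGraph.dist_comm]; exact hdvc
  have hdcw : T.dist c w = 1 := SimpleGraph.dist_eq_one_iff_adj.mpr hAdjcw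
  have hdwv : T.dist w v + 1 = k := by omega
  have hdvw : T.dist v w + 1 = k := by
    rw [SimpleGraph.dist_comm (u := v) (v := w)]; exact hdwv
  -- the neighbour v' of v towards c
  obtain ⟨v', hAdjvv', hv'c⟩ := exists_next hconn hacyc (x := v) (y := c) (by omega)
  rw [hdvc] at hv'c
  have hdvv' : T.dist v v' = 1 := SimpleGraph.dist_eq_one_iff_adj.mpr hAdjvv'
  have hdv'v : T.dist v' v = 1 := by rw [SimpleGraph.dist_comm]; exact hdvv'
  have hdcv' : T.dist c v' + 1 = k := by
    rw [SimpleGraph.dist_comm (u := c) (v := v')]; exact hv'c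
  -- the position of w relative to v'
  have hsplit : (k = 1 ∧ w = v ∧ v' = c) ∨ (2 ≤ k ∧ T.dist v' w + 2 = k) := by
    rcases Nat.lt_or_ge k 2 with h2 | h2
    · left
      have h1 : k = 1 := by omega
      have hw0 : T.dist w v = 0 := by omega
      have hv0 : T.dist v' c = 0 := by omega
      exact ⟨h1, hconn.dist_eq_zero_iff.mp hw0, hconn.dist_eq_zero_iff.mp hv0⟩
    · right
      have ha1 : T.dist c w + T.dist w v = T.dist c v := by omega
      have hb1 : T.dist c v' + T.dist v' v = T.dist c v := by omega
      have hle1 : T.dist c w ≤ T.dist c v' := by omega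
      have hbtw := between_trans hconn hacyc ha1 hb1 hle1
      have e1 : T.dist v' w = T.dist w v' := SimpleGraph.dist_comm
      exact ⟨h2, by omega⟩
  -- helpers for membership in the pointwise stabilizer triples
  have memPair : ∀ (a b : V) (x : Equiv.Perm V), x ∈ G → x a = a → x b = b →
      x ∈ G ⊓ ptStab {a} ⊓ ptStab {b} := by
    intro a b x h1 h2 h3
    refine Subgroup.mem_inf.mpr ⟨Subgroup.mem_inf.mpr ⟨h1, ?_⟩, ?_⟩ <;>
      · intro y hy
        rw [Set.mem_singleton_iff] at hy
        subst hy
        assumption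
  have exPair : ∀ (a b : V) (x : Equiv.Perm V), x ∈ G ⊓ ptStab {a} ⊓ ptStab {b} →
      x ∈ G ∧ x a = a ∧ x b = b := by
    intro a b x hx
    obtain ⟨h12, h3⟩ := Subgroup.mem_inf.mp hx
    obtain ⟨h1, h2⟩ := Subgroup.mem_inf.mp h12
    exact ⟨h1, h2 a rfl, h3 b rfl⟩
  -- the subgroup K realizing Θ(v', c, 1)
  set K : Subgroup ↥(G ⊓ ptStab {c} ⊓ ptStab {w}) :=
    (ptStab {u : V | T.dist v' u = T.dist v' c + 1 ∧
        T.dist v' c + T.dist c u ≠ T.dist v' u}).comap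
      (G ⊓ ptStab {c} ⊓ ptStab {w}).subtype with hKdef
  have hOsK : Os ≤ Subgroup.map (res c w) K := by
    rcases hsplit with ⟨h1, hwv, hv'c'⟩ | ⟨h2, hwv'⟩
    · have hKtop : K = ⊤ := by
        rw [eq_top_iff]
        intro x _
        rw [hKdef, Subgroup.mem_comap]
        intro u hu
        simp only [Set.mem_setOf_eq] at hu
        rw [hv'c', SimpleGraph.dist_self] at hu
        omega
      rw [hKtop, ← MonoidHom.range_eq_map]
      exact hOs.1
    · have e1 : T.dist w v' = T.dist v' w := SimpleGraph.dist_comm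
      have hthis := hb h2 c v' w hEven (by omega) hAdjcw (by omega) Os hOs
      simpa only [Theta, hKdef] using hthis
  -- downward rigidity for elements fixing c and the K-stabilized sphere
  have Kdown : ∀ x : Equiv.Perm V, x ∈ G → x c = c →
      (∀ u, T.dist v' u = T.dist v' c + 1 →
        T.dist v' c + T.dist c u ≠ T.dist v' u → x u = u) →
      ∀ u, T.dist v' u ≤ k → T.dist v' c + T.dist c u ≠ T.dist v' u → x u = u := by
    intro x h1 h2 h3 u h4 h5
    exact down hconn hacyc hthick (hG x h1) v' c h2 k
      (fun u hu hcnd => h3 u (by omega) hcnd)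
      (k - T.dist v' u) (T.dist v' u) u (by omega) rfl h5
  -- the set of branch vertices
  set PP : Set V := {p : V | T.dist v p + 1 = k ∧ T.dist v' p = k} with hPPdef
  have hPfin : PP.Finite := by
    refine Set.Finite.subset (sphere_finite hconn hacyc hlf v (k - 1)) ?_
    intro p hp
    have := hp.1
    simp only [Set.mem_setOf_eq]
    omega
  haveI hPfty : Fintype ↥PP := hPfin.fintype
  -- the neighbour of each branch vertex towards v'
  have hwp_ex : ∀ p : ↥PP, ∃ z, T.Adj ↑p z ∧ T.dist z v' + 1 = T.dist ↑p v' := by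
    intro p
    refine exists_next hconn hacyc ?_
    have e1 : T.dist (↑p : V) v' = T.dist v' ↑p := SimpleGraph.dist_comm
    have := p.2.2
    omega
  choose wp hwpadj hwpd using hwp_ex
  have hdv'wp : ∀ p : ↥PP, T.dist v' (wp p) + 1 = k := by
    intro p
    have e1 : T.dist (↑p : V) v' = T.dist v' ↑p := SimpleGraph.dist_comm
    have e2 : T.dist (wp p) v' = T.dist v' (wp p) := SimpleGraph.dist_comm
    have := p.2.2
    have := hwpd p
    omega
  -- distance from c to branch vertices (F2)
  have hdcp : ∀ p : ↥PP, T.dist c ↑p + 1 = 2 * k := by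
    intro p
    have hp1 : T.dist v (↑p : V) + 1 = k := p.2.1
    have hp2 : T.dist v' (↑p : V) = k := p.2.2
    obtain ⟨P₁, hP₁len⟩ := hconn.exists_walk_length_eq_dist c v'
    obtain ⟨P₂, hP₂len⟩ := hconn.exists_walk_length_eq_dist v' ↑p
    have hP₁path : P₁.IsPath := P₁.isPath_of_length_eq_dist hP₁len
    have hP₂path : P₂.IsPath := P₂.isPath_of_length_eq_dist hP₂len
    have hinter : ∀ x, x ∈ P₁.support → x ∈ P₂.support → x = v' := by
      intro x hx1 hx2
      have bet1 := between_of_mem_support hconn hP₁len hx1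
      have bet2 := between_of_mem_support hconn hP₂len hx2
      by_cases h0 : T.dist v' x = 0
      · exact (hconn.dist_eq_zero_iff.mp h0).symm
      · exfalso
        have star : T.dist v x = 1 + T.dist v' x := by
          have t1 : T.dist v x ≤ T.dist v v' + T.dist v' x := hconn.dist_triangle
          have t2 : T.dist v c ≤ T.dist v x + T.dist x c := hconn.dist_triangle
          have e1 : T.dist x v' = T.dist v' x := SimpleGraph.dist_comm
          have e2 : T.dist x c = T.dist c x := SimpleGraph.dist_comm
          omega
        have hbv : T.dist v' v + T.dist v ↑p = T.dist v' ↑p := by omega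
        have hlex : T.dist v' v ≤ T.dist v' x := by omega
        have happ := between_trans hconn hacyc hbv bet2 hlex
        omega
    have hnd2 := hP₂path.support_nodup
    rw [Walk.support_eq_cons] at hnd2
    obtain ⟨hv'tl, htlnd⟩ := List.nodup_cons.mp hnd2
    have hApath : (P₁.append P₂).IsPath := by
      rw [Walk.isPath_def, Walk.support_append, List.nodup_append]
      refine ⟨hP₁path.support_nodup, htlnd, ?_⟩
      intro x hx1 y hx2 hxy
      subst hxy
      have hx2' : x ∈ P₂.support := by
        rw [Walk.support_eq_cons]
        exact List.mem_cons_of_mem _ hx2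
      exact hv'tl ((hinter x hx1 hx2') ▸ hx2)
    have hAlen := path_length_eq_dist hconn hacyc hApath
    rw [Walk.length_append, hP₁len, hP₂len] at hAlen
    omega
  -- branch vertices have odd type
  have hOddp : ∀ p : ↥PP, Odd (T.dist o ↑p) := by
    intro p
    have hpar := parity3 hconn hacyc o c ↑p
    have := hdcp p
    rw [Nat.even_add, Nat.even_add] at hpar
    rcases hEven with ⟨m, hm⟩
    rw [Nat.odd_iff]
    rw [Nat.even_iff, Nat.even_iff, Nat.even_iff] at hpar
    omega
  -- wp p is never c (for k ≥ 2)
  have hwpnec : ∀ p : ↥PP, 2 ≤ k → T.dist c (wp p) ≠ 0 := by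
    intro p h2 h0
    have hwpc : wp p = c := (hconn.dist_eq_zero_iff.mp h0).symm
    have hadjpc : T.Adj c ↑p := by rw [← hwpc]; exact (hwpadj p).symm
    have hpw : (↑p : V) = w := by
      refine parent_unique hconn hacyc (o := v) hadjpc hAdjcw ?_ ?_
      · have := p.2.1; omega
      · have e : T.dist v w = T.dist w v := SimpleGraph.dist_comm; omega
    rcases hsplit with ⟨h1, _, _⟩ | ⟨_, hwv'⟩
    · omega
    · have := p.2.2
      rw [hpw] at this
      omega
  -- elements of K fix each branch vertex and its parent
  have hKfixP : ∀ x : Equiv.Perm V, x ∈ G → x c = c → x w = w →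
      (∀ u, T.dist v' u = T.dist v' c + 1 →
        T.dist v' c + T.dist c u ≠ T.dist v' u → x u = u) →
      ∀ p : ↥PP, x ↑p = ↑p ∧ x (wp p) = wp p := by
    intro x h1 h2 h3 h4 p
    rcases hsplit with ⟨h1k, hwv, hv'c'⟩ | ⟨h2k, hwv'⟩
    · have hp0 : T.dist v (↑p : V) = 0 := by have := p.2.1; omega
      have hpv : (↑p : V) = v := (hconn.dist_eq_zero_iff.mp hp0).symm
      have hwp0 : T.dist v' (wp p) = 0 := by have := hdv'wp p; omega
      have hwpv' : wp p = v' := (hconn.dist_eq_zero_iff.mp hwp0).symm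
      constructor
      · rw [hpv, ← hwv]; exact h3
      · rw [hwpv', hv'c']; exact h2
    · constructor
      · refine h4 ↑p (by have := p.2.2; omega) ?_
        have := hdcp p
        have := p.2.2
        omega
      · refine Kdown x h1 h2 h4 (wp p) (by have := hdv'wp p; omega) ?_
        have := hwpnec p h2k
        have := hdv'wp p
        omega
  -- finiteness of local permutation groups
  have finPair : ∀ a b : V, Finite {u : V // T.Adj a u ∧ u ≠ b} := by
    intro a b
    have hsub : {u : V | T.Adj a u ∧ u ≠ b} ⊆ T.neighborSet a := fun u hu => hu.1
    exact ((hlf a).subset hsub).to_subtype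
  -- homomorphisms to the local actions
  have hKmem : ∀ x : ↥K, ∀ p : ↥PP,
      ((x : ↥(G ⊓ ptStab {c} ⊓ ptStab {w})) : Equiv.Perm V) ∈
        G ⊓ ptStab {(↑p : V)} ⊓ ptStab {wp p} := by
    intro x p
    obtain ⟨h1, h2, h3⟩ := exPair c w _ (x : ↥(G ⊓ ptStab {c} ⊓ ptStab {w})).2
    have h4 : ∀ u, T.dist v' u = T.dist v' c + 1 →
        T.dist v' c + T.dist c u ≠ T.dist v' u →
        ((x : ↥(G ⊓ ptStab {c} ⊓ ptStab {w})) : Equiv.Perm V) u = u := by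
      intro u hu1 hu2
      exact (Subgroup.mem_comap.mp x.2) u ⟨hu1, hu2⟩
    obtain ⟨hp, hwp'⟩ := hKfixP _ h1 h2 h3 h4 p
    exact memPair _ _ _ h1 hp hwp'
  let π : ∀ p : ↥PP, ↥K →* Equiv.Perm {u : V // T.Adj (↑p : V) u ∧ u ≠ wp p} :=
    fun p => (res ↑p (wp p)).comp
      (MonoidHom.codRestrict ((G ⊓ ptStab {c} ⊓ ptStab {w}).subtype.comp K.subtype)
        (G ⊓ ptStab {(↑p : V)} ⊓ ptStab {wp p}) (fun x => hKmem x p))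
  let π₁ : ↥K →* Equiv.Perm {u : V // T.Adj c u ∧ u ≠ w} := (res c w).comp K.subtype
  -- soluble residuals of the local groups at branch vertices
  have hSRex : ∀ p : ↥PP,
      ∃ (N : Subgroup (Equiv.Perm {u : V // T.Adj (↑p : V) u ∧ u ≠ wp p})) (n₀ : ℕ),
        IsSolubleResidualIn (res ↑p (wp p)).range N ∧ ⁅N, N⁆ = N ∧
          ∀ m, n₀ ≤ m → itComm (res ↑p (wp p)).range m ≤ N := by
    intro p
    haveI := finPair (↑p : V) (wp p)
    exact exists_SR _
  choose NO nO hNO hNOperf hNObd using hSRex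
  -- Os is perfect
  haveI := finPair c w
  have hOsPerf : ⁅Os, Os⁆ = Os := SR_perfect hOs
  have hrange : π₁.range = Subgroup.map (res c w) K := by
    rw [MonoidHom.range_comp, Subgroup.range_subtype]
  have hOsn : ∀ n, Os ≤ Subgroup.map π₁ (derivedSeries ↥K n) :=
    perfect_le_map_derivedSeries π₁ hOsPerf (hrange ▸ hOsK)
  set n : ℕ := Finset.univ.sup nO with hndef
  -- now take σ in Os
  intro σ hσ
  obtain ⟨gtil, hgtilD, hgtilσ⟩ := Subgroup.mem_map.mp (hOsn n hσ)
  -- the local actions of gtil lie in the soluble residuals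
  have hτ : ∀ p : ↥PP, π p gtil ∈ NO p := by
    intro p
    refine hNObd p n (Finset.le_sup (Finset.mem_univ p)) ?_
    refine map_derivedSeries_le (π p) _ ?_ n (Subgroup.mem_map_of_mem _ hgtilD)
    rw [MonoidHom.range_comp]
    exact Subgroup.map_le_range _ _
  -- correcting elements
  have hcorr : ∀ p : ↥PP, ∃ h : Equiv.Perm V, h ∈ G ∧ h ↑p = ↑p ∧ h (wp p) = wp p ∧
      (∀ u, T.dist v' u = T.dist v' ↑p + 1 ∧
        T.dist v' ↑p + T.dist (↑p : V) u ≠ T.dist v' u → h u = u) ∧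
      (∀ x : {u : V // T.Adj (↑p : V) u ∧ u ≠ wp p}, h ↑x = ((π p gtil)⁻¹ x : V)) := by
    intro p
    have hmem : (π p gtil)⁻¹ ∈ Theta T G ↑p (wp p) (res ↑p (wp p)) v' 1 :=
      ha ↑p v' (wp p) (hOddp p) p.2.2 (hwpadj p) (hwpd p).symm (NO p) (hNO p)
        (inv_mem (hτ p))
    simp only [Theta] at hmem
    obtain ⟨htil, htilK, htileq⟩ := Subgroup.mem_map.mp hmem
    obtain ⟨e1, e2, e3⟩ := exPair ↑p (wp p) _ htil.2
    refine ⟨↑htil, e1, e2, e3, ?_, ?_⟩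
    · intro u hu
      exact (Subgroup.mem_comap.mp htilK) u hu
    · intro x
      have h5 := hres ↑p (wp p) htil x
      rw [htileq] at h5
      exact h5.symm
  choose hfn hf1 hf2 hf3 hf4 hf5 using hcorr
  -- downward rigidity for the correcting elements
  have hdownH : ∀ p : ↥PP, ∀ u, T.dist v' u ≤ k + 1 →
      T.dist v' ↑p + T.dist (↑p : V) u ≠ T.dist v' u → hfn p u = u := by
    intro p u h4 h5
    have hp2 := p.2.2
    exact down hconn hacyc hthick (hG _ (hf1 p)) v' ↑p (hf2 p) (k + 1)
      (fun u hu hcnd => hf4 p u ⟨by omega, hcnd⟩)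
      (k + 1 - T.dist v' u) (T.dist v' u) u (by omega) rfl h5
  -- the global correcting element
  set glist : List (Equiv.Perm V) := (Finset.univ : Finset ↥PP).toList.map hfn
    with hglistdef
  set gcoe : Equiv.Perm V :=
    ((gtil : ↥(G ⊓ ptStab {c} ⊓ ptStab {w})) : Equiv.Perm V) with hgcoedef
  set g : Equiv.Perm V := glist.prod * gcoe with hgdef
  obtain ⟨hgcG, hgcc, hgcw⟩ := exPair c w gcoe
    (gtil : ↥(G ⊓ ptStab {c} ⊓ ptStab {w})).2
  have hgS₁ : ∀ u, T.dist v' u = T.dist v' c + 1 →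
      T.dist v' c + T.dist c u ≠ T.dist v' u → gcoe u = u := by
    intro u h5 h6
    exact (Subgroup.mem_comap.mp gtil.2) u ⟨h5, h6⟩
  have hfixlist : ∀ u : V, (∀ p : ↥PP, hfn p u = u) → glist.prod u = u := by
    intro u hu
    refine list_prod_apply_fix _ _ ?_
    intro f hf
    rw [hglistdef, List.mem_map] at hf
    obtain ⟨p, _, rfl⟩ := hf
    exact hu p
  have hfn_fix_c : ∀ p : ↥PP, hfn p c = c := by
    intro p
    refine hdownH p c (by omega) ?_
    have e1 : T.dist (↑p : V) c = T.dist c ↑p := SimpleGraph.dist_comm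
    have := hdcp p
    have := p.2.2
    omega
  have hfn_fix_w : ∀ p : ↥PP, hfn p w = w := by
    intro p
    rcases hsplit with ⟨h1k, hwv, hv'c'⟩ | ⟨h2k, hwv'⟩
    · have hp0 : T.dist v (↑p : V) = 0 := by have := p.2.1; omega
      have hpv : (↑p : V) = v := (hconn.dist_eq_zero_iff.mp hp0).symm
      rw [hwv, ← hpv]
      exact hf2 p
    · refine hdownH p w (by omega) ?_
      have := p.2.2
      omega
  have hfn_fix_nbr : ∀ y, T.Adj c y → y ≠ w → ∀ p : ↥PP, hfn p y = y := by
    intro y hcy hyw p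
    have hdy : T.dist v' y = k := by
      rcases dist_step hconn hacyc v' hcy with h | h
      · omega
      · exfalso
        rcases hsplit with ⟨h1k, hwv, hv'c'⟩ | ⟨h2k, hwv'⟩
        · omega
        · exact hyw (parent_unique hconn hacyc (o := v') hcy hAdjcw
            (by omega) (by omega))
    have hdvy : T.dist v y = k + 1 := by
      rcases dist_step hconn hacyc v hcy with h | h
      · omega
      · exfalso
        have e : T.dist v w = T.dist w v := SimpleGraph.dist_comm
        exact hyw (parent_unique hconn hacyc (o := v) hcy hAdjcw
          (by omega) (by omega))
    refine hdownH p y (by omega) ?_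
    have hne : T.dist (↑p : V) y ≠ 0 := by
      intro h0
      have hpy : (↑p : V) = y := hconn.dist_eq_zero_iff.mp h0
      have := p.2.1
      rw [hpy] at this
      omega
    have := p.2.2
    omega
  have hgval : ∀ x : {u : V // T.Adj c u ∧ u ≠ w}, gcoe ↑x = ↑(σ x) := by
    intro x
    have h1 := hres c w (gtil : ↥(G ⊓ ptStab {c} ⊓ ptStab {w})) x
    have h2 : res c w (gtil : ↥(G ⊓ ptStab {c} ⊓ ptStab {w})) = σ := hgtilσ
    rw [h2] at h1
    exact h1.symm
  -- assembling the final element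
  have hgG : g ∈ G := by
    rw [hgdef]
    refine mul_mem ?_ hgcG
    refine Subgroup.list_prod_mem G ?_
    intro f hf
    rw [hglistdef, List.mem_map] at hf
    obtain ⟨p, _, rfl⟩ := hf
    exact hf1 p
  have hgc : g c = c := by
    rw [hgdef, Equiv.Perm.mul_apply, hgcc]
    exact hfixlist c hfn_fix_c
  have hgw : g w = w := by
    rw [hgdef, Equiv.Perm.mul_apply, hgcw]
    exact hfixlist w hfn_fix_w
  simp only [Theta]
  refine Subgroup.mem_map.mpr ⟨⟨g, memPair c w g hgG hgc hgw⟩,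
    Subgroup.mem_comap.mpr ?_, ?_⟩
  · -- g fixes B^v_0(c)
    intro u hu
    obtain ⟨hu1, hu2⟩ := hu
    rw [hdvc] at hu1 hu2
    have hu1' : T.dist v u = k := by omega
    have hcu : T.dist c u ≠ 0 := by omega
    have hstep := dist_step hconn hacyc u hAdjvv'
    have e1 : T.dist u v' = T.dist v' u := SimpleGraph.dist_comm
    have e2 : T.dist u v = T.dist v u := SimpleGraph.dist_comm
    show g u = u
    rcases (show T.dist v' u = k + 1 ∨ T.dist v' u + 1 = k by omega) with hU2 | hU1
    · -- U₂ : u lies behind a branch vertex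
      obtain ⟨pu, hpuadj, hpud⟩ := exists_next hconn hacyc (x := u) (y := v) (by omega)
      have hpv : T.dist v pu + 1 = k := by
        have e3 : T.dist pu v = T.dist v pu := SimpleGraph.dist_comm
        omega
      have hpv' : T.dist v' pu = k := by
        rcases dist_step hconn hacyc v' hpuadj with h | h
        · have t : T.dist v' pu ≤ T.dist v' v + T.dist v pu := hconn.dist_triangle
          omega
        · omega
      set P : ↥PP := ⟨pu, ⟨hpv, hpv'⟩⟩ with hPdef
      have hPval : T.dist v' (↑P : V) = k := hpv'
      have hPv : T.dist v (↑P : V) + 1 = k := hpv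
      have hunw : u ≠ wp P := by
        intro h
        have := hdv'wp P
        rw [← h] at this
        omega
      have hadj' : T.Adj (↑P : V) u := hpuadj.symm
      have hτeq : π P gtil = res ↑P (wp P) ⟨gcoe, hKmem gtil P⟩ := rfl
      have hτval : (↑(π P gtil ⟨u, hadj', hunw⟩) : V) = gcoe u := by
        rw [hτeq]
        exact hres ↑P (wp P) ⟨gcoe, hKmem gtil P⟩ ⟨u, hadj', hunw⟩
      have hu'prop : T.Adj (↑P : V) (gcoe u) ∧ gcoe u ≠ wp P := by
        rw [← hτval]
        exact (π P gtil ⟨u, hadj', hunw⟩).2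
      have hu'lev : T.dist v' (gcoe u) = k + 1 := by
        rcases dist_step hconn hacyc v' hu'prop.1 with h | h
        · omega
        · exfalso
          refine hu'prop.2 (parent_unique hconn hacyc (o := v') hu'prop.1
            (hwpadj P) (by omega) ?_)
          have := hdv'wp P
          omega
      have hothers : ∀ q : ↥PP, q ≠ P → ∀ z, T.Adj (↑P : V) z →
          T.dist v' z = k + 1 → hfn q z = z := by
        intro q hq z hadjz hlevz
        refine hdownH q z (by omega) ?_
        have hq2 := q.2.2
        have hne1 : T.dist (↑q : V) z ≠ 1 := by
          intro h1
          have hadjq : T.Adj (↑q : V) z := adj_of_dist_eq_one h1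
          have heqq : (↑q : V) = ↑P := parent_unique hconn hacyc (o := v')
            hadjq.symm hadjz.symm (by omega) (by omega)
          exact hq (Subtype.ext heqq)
        omega
      have hPmem : P ∈ (Finset.univ : Finset ↥PP).toList :=
        Finset.mem_toList.mpr (Finset.mem_univ P)
      obtain ⟨l₁, l₂, hls⟩ := List.append_of_mem hPmem
      have hnd : ((Finset.univ : Finset ↥PP).toList).Nodup := Finset.nodup_toList _
      rw [hls] at hnd
      rw [List.nodup_append] at hnd
      have hPl₁ : P ∉ l₁ := fun h => hnd.2.2 P h P List.mem_cons_self rfl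
      have hPl₂ : P ∉ l₂ := (List.nodup_cons.mp hnd.2.1).1
      rw [hgdef, Equiv.Perm.mul_apply, hglistdef, hls, List.map_append, List.map_cons]
      refine list_prod_apply_move _ _ _ (gcoe u) u ?_ ?_ ?_
      · intro f hf
        rw [List.mem_map] at hf
        obtain ⟨q, hql, rfl⟩ := hf
        exact hothers q (fun h => hPl₂ (h ▸ hql)) (gcoe u) hu'prop.1 hu'lev
      · have h5 := hf5 P (π P gtil ⟨u, hadj', hunw⟩)
        rw [hτval] at h5
        rw [h5]; exact congrArg Subtype.val (Equiv.symm_apply_apply _ _)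
      · intro f hf
        rw [List.mem_map] at hf
        obtain ⟨q, hql, rfl⟩ := hf
        exact hothers q (fun h => hPl₁ (h ▸ hql)) u hadj' hU2
    · -- U₁ : u is fixed by gcoe and each correcting element
      have hg1 : gcoe u = u := by
        refine Kdown gcoe hgcG hgcc hgS₁ u (by omega) ?_
        omega
      rw [hgdef, Equiv.Perm.mul_apply, hg1]
      refine hfixlist u ?_
      intro p
      refine hdownH p u (by omega) ?_
      have := p.2.2
      omega
  · -- the induced action is σ
    refine Equiv.ext fun x => Subtype.ext ?_
    have h1 := hres c w ⟨g, memPair c w g hgG hgc hgw⟩ x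
    rw [h1]
    show g ↑x = ↑(σ x)
    rw [hgdef, Equiv.Perm.mul_apply, hgval x]
    exact hfixlist ↑(σ x) (fun p => hfn_fix_nbr ↑(σ x) (σ x).2.1 (σ x).2.2 p)
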